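/- The symmetrized relative entropy (P, Q) ↦ H(P,Q) + H(Q,P) is jointly convex on pairs of positive definite matrices: for λ ∈ [0,1], H(λP₁+(1-λ)P₂, λQ₁+(1-λ)Q₂) + H(λQ₁+(1-λ)Q₂, λP₁+(1-λ)P₂) ≤ λ[H(P₁,Q₁)+H(Q₁,P₁)] + (1-λ)[H(P₂,Q₂)+H(Q₂,P₂)]. -/

import Mathlib

open Matrix
open scoped ComplexOrder

/-- Matrix logarithm via functional calculus (junk value `0` off the Hermitian matrices). -/
noncomputable def mlog {n : ℕ} (A : Matrix (Fin n) (Fin n) ℂ) :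
    Matrix (Fin n) (Fin n) ℂ :=
  if h : A.IsHermitian then h.cfc Real.log else 0

/-- Quantum relative entropy `H(P,Q) = Tr (P (log P - log Q))` (a real number for
positive definite `P, Q`). -/
noncomputable def relEnt {n : ℕ} (P Q : Matrix (Fin n) (Fin n) ℂ) : ℝ :=
  ((P * (mlog P - mlog Q)).trace).re

namespace SymmAux

variable {n : ℕ}

noncomputable def evU {A : Matrix (Fin n) (Fin n) ℂ} (hA : A.IsHermitian) :
    Matrix (Fin n) (Fin n) ℂ :=
  (Matrix.IsHermitian.eigenvectorUnitary hA : Matrix (Fin n) (Fin n) ℂ)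

lemma evU_star_mul {A : Matrix (Fin n) (Fin n) ℂ} (hA : A.IsHermitian) :
    star (evU hA) * evU hA = 1 := by
  simpa [evU] using (Matrix.mem_unitaryGroup_iff').mp (Matrix.IsHermitian.eigenvectorUnitary hA).2

lemma evU_mul_star {A : Matrix (Fin n) (Fin n) ℂ} (hA : A.IsHermitian) :
    evU hA * star (evU hA) = 1 := by
  simpa [evU] using (Matrix.mem_unitaryGroup_iff).mp (Matrix.IsHermitian.eigenvectorUnitary hA).2

lemma spectral {A : Matrix (Fin n) (Fin n) ℂ} (hA : A.IsHermitian) :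
    A = evU hA * diagonal (Complex.ofReal ∘ hA.eigenvalues) * star (evU hA) := by
  simpa [evU] using hA.spectral_theorem



lemma trace_conjTranspose_mul (A B : Matrix (Fin n) (Fin n) ℂ) :
    (Aᴴ * B).trace = ∑ i, ∑ j, (starRingEnd ℂ) (A i j) * B i j := by
  rw [Finset.sum_comm]
  simp [Matrix.trace, Matrix.mul_apply, Matrix.diag]

lemma evU_cancel1 {A : Matrix (Fin n) (Fin n) ℂ} (hA : A.IsHermitian)
    (Z : Matrix (Fin n) (Fin n) ℂ) : evU hA * (star (evU hA) * Z) = Z := by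
  rw [← Matrix.mul_assoc, evU_mul_star, Matrix.one_mul]

lemma evU_cancel2 {A : Matrix (Fin n) (Fin n) ℂ} (hA : A.IsHermitian)
    (Z : Matrix (Fin n) (Fin n) ℂ) : star (evU hA) * (evU hA * Z) = Z := by
  rw [← Matrix.mul_assoc, evU_star_mul, Matrix.one_mul]

section PD
variable {P Q : Matrix (Fin n) (Fin n) ℂ} (hP : P.PosDef) (hQ : Q.PosDef)

/-- transformed matrix in the two eigenbases -/
noncomputable def tf (hP : P.PosDef) (hQ : Q.PosDef) (Y : Matrix (Fin n) (Fin n) ℂ) :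
    Matrix (Fin n) (Fin n) ℂ :=
  star (evU hP.1) * Y * evU hQ.1

lemma tf_conjTranspose (Y : Matrix (Fin n) (Fin n) ℂ) :
    (tf hP hQ Y)ᴴ = star (evU hQ.1) * Yᴴ * evU hP.1 := by
  simp [tf, Matrix.conjTranspose_mul, Matrix.mul_assoc, star]

lemma trace_hermitian_mul (X Y : Matrix (Fin n) (Fin n) ℂ) (hX : X.IsHermitian) :
    (X * Y).trace = ((tf hP hQ X)ᴴ * tf hP hQ Y).trace := by
  rw [tf_conjTranspose hP hQ X, hX.eq]
  simp only [tf]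
  have e : star (evU hQ.1) * X * evU hP.1 * (star (evU hP.1) * Y * evU hQ.1)
      = star (evU hQ.1) * (X * Y * evU hQ.1) := by
    simp only [Matrix.mul_assoc, evU_cancel1]
  rw [e]
  conv_rhs => rw [Matrix.trace_mul_comm]
  rw [Matrix.mul_assoc, Matrix.mul_assoc, evU_mul_star, Matrix.mul_one]

lemma trace_sandwich_P (Y : Matrix (Fin n) (Fin n) ℂ) :
    (Yᴴ * P * Y).trace
      = ((tf hP hQ Y)ᴴ * (diagonal (Complex.ofReal ∘ hP.1.eigenvalues) * tf hP hQ Y)).trace := by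
  have hd : diagonal (Complex.ofReal ∘ hP.1.eigenvalues) = star (evU hP.1) * P * evU hP.1 := by
    simpa [evU] using hP.1.conjStarAlgAut_star_eigenvectorUnitary.symm
  rw [tf_conjTranspose hP hQ Y, hd]
  simp only [tf]
  have e : star (evU hQ.1) * Yᴴ * evU hP.1 *
        (star (evU hP.1) * P * evU hP.1 * (star (evU hP.1) * Y * evU hQ.1))
      = star (evU hQ.1) * (Yᴴ * P * Y * evU hQ.1) := by
    simp only [Matrix.mul_assoc, evU_cancel1]
  rw [e]
  conv_rhs => rw [Matrix.trace_mul_comm]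
  rw [Matrix.mul_assoc, Matrix.mul_assoc, Matrix.mul_assoc, evU_mul_star]
  simp [Matrix.mul_assoc]

lemma trace_sandwich_Q (Y : Matrix (Fin n) (Fin n) ℂ) :
    (Yᴴ * Y * Q).trace
      = ((tf hP hQ Y)ᴴ * (tf hP hQ Y * diagonal (Complex.ofReal ∘ hQ.1.eigenvalues))).trace := by
  have hd : diagonal (Complex.ofReal ∘ hQ.1.eigenvalues) = star (evU hQ.1) * Q * evU hQ.1 := by
    simpa [evU] using hQ.1.conjStarAlgAut_star_eigenvectorUnitary.symm
  rw [tf_conjTranspose hP hQ Y, hd]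
  simp only [tf]
  have e : star (evU hQ.1) * Yᴴ * evU hP.1 *
        (star (evU hP.1) * Y * evU hQ.1 * (star (evU hQ.1) * Q * evU hQ.1))
      = star (evU hQ.1) * (Yᴴ * Y * Q * evU hQ.1) := by
    simp only [Matrix.mul_assoc, evU_cancel1]
  rw [e]
  conv_rhs => rw [Matrix.trace_mul_comm]
  rw [Matrix.mul_assoc, Matrix.mul_assoc, Matrix.mul_assoc, evU_mul_star]
  simp [Matrix.mul_assoc]

/-- the integrand family -/
noncomputable def phi (hP : P.PosDef) (hQ : Q.PosDef) (t : ℝ) : ℝ :=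
  ∑ i, ∑ j, ‖tf hP hQ (P - Q) i j‖ ^ 2
    / (t * hP.1.eigenvalues i + (1 - t) * hQ.1.eigenvalues j)

lemma denom_pos {t : ℝ} (ht : t ∈ Set.Icc (0:ℝ) 1) (i j : Fin n) :
    0 < t * hP.1.eigenvalues i + (1 - t) * hQ.1.eigenvalues j := by
  have hp := hP.eigenvalues_pos i
  have hq := hQ.eigenvalues_pos j
  obtain ⟨h0, h1⟩ := ht
  rcases eq_or_lt_of_le h0 with h | h
  · simp only [← h]; nlinarith
  · nlinarith

lemma scalar_amgm (c m : ℂ) (d : ℝ) (hd : 0 < d) :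
    2 * ((starRingEnd ℂ) c * m).re ≤ d * ‖m‖ ^ 2 + ‖c‖ ^ 2 / d := by
  have h1 : ((starRingEnd ℂ) c * m).re ≤ ‖c‖ * ‖m‖ := by
    calc ((starRingEnd ℂ) c * m).re ≤ ‖(starRingEnd ℂ) c * m‖ := Complex.re_le_norm _
    _ = ‖c‖ * ‖m‖ := by rw [norm_mul, Complex.norm_conj]
  have h2 : 2 * (‖c‖ * ‖m‖) ≤ d * ‖m‖ ^ 2 + ‖c‖ ^ 2 / d := by
    rw [← sub_nonneg]
    have key : d * ‖m‖ ^ 2 + ‖c‖ ^ 2 / d - 2 * (‖c‖ * ‖m‖) = (d * ‖m‖ - ‖c‖) ^ 2 / d := by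
      field_simp; ring
    rw [key]
    positivity
  linarith

lemma trace_form_re (Y : Matrix (Fin n) (Fin n) ℂ) :
    (((P - Q) * Y).trace).re
      = ∑ i, ∑ j, ((starRingEnd ℂ) (tf hP hQ (P - Q) i j) * tf hP hQ Y i j).re := by
  rw [trace_hermitian_mul hP hQ _ _ (hP.1.sub hQ.1), trace_conjTranspose_mul]
  simp [Complex.re_sum]

lemma trace_P_re (Y : Matrix (Fin n) (Fin n) ℂ) :
    ((Yᴴ * P * Y).trace).re = ∑ i, ∑ j, hP.1.eigenvalues i * ‖tf hP hQ Y i j‖ ^ 2 := by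
  rw [trace_sandwich_P hP hQ, trace_conjTranspose_mul]
  simp only [Complex.re_sum]
  refine Finset.sum_congr rfl fun i _ => Finset.sum_congr rfl fun j _ => ?_
  rw [Matrix.diagonal_mul, mul_comm ((starRingEnd ℂ) _), mul_assoc,
    mul_comm (tf hP hQ Y i j), RCLike.conj_mul]
  simp [← Complex.ofReal_pow, ← Complex.ofReal_mul]

lemma trace_Q_re (Y : Matrix (Fin n) (Fin n) ℂ) :
    ((Yᴴ * Y * Q).trace).re = ∑ i, ∑ j, hQ.1.eigenvalues j * ‖tf hP hQ Y i j‖ ^ 2 := by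
  rw [trace_sandwich_Q hP hQ, trace_conjTranspose_mul]
  simp only [Complex.re_sum]
  refine Finset.sum_congr rfl fun i _ => Finset.sum_congr rfl fun j _ => ?_
  rw [Matrix.mul_diagonal, ← mul_assoc, RCLike.conj_mul]
  simp [← Complex.ofReal_pow, ← Complex.ofReal_mul, mul_comm]

/-- Lemma A: variational upper bound -/
lemma lemmaA {t : ℝ} (ht : t ∈ Set.Icc (0:ℝ) 1) (Y : Matrix (Fin n) (Fin n) ℂ) :
    2 * (((P - Q) * Y).trace).re - t * ((Yᴴ * P * Y).trace).re
      - (1 - t) * ((Yᴴ * Y * Q).trace).re ≤ phi hP hQ t := by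
  rw [trace_form_re hP hQ, trace_P_re hP hQ, trace_Q_re hP hQ, phi]
  simp only [Finset.mul_sum, ← Finset.sum_sub_distrib]
  refine Finset.sum_le_sum fun i _ => Finset.sum_le_sum fun j _ => ?_
  have hd := denom_pos hP hQ ht i j
  have := scalar_amgm (tf hP hQ (P - Q) i j) (tf hP hQ Y i j)
    (t * hP.1.eigenvalues i + (1 - t) * hQ.1.eigenvalues j) hd
  nlinarith [this]

/-- the optimizer -/
noncomputable def ybar (hP : P.PosDef) (hQ : Q.PosDef) (t : ℝ) :
    Matrix (Fin n) (Fin n) ℂ :=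
  evU hP.1 * (Matrix.of fun i j => tf hP hQ (P - Q) i j
    / (t * hP.1.eigenvalues i + (1 - t) * hQ.1.eigenvalues j : ℝ)) * star (evU hQ.1)

lemma tf_ybar (t : ℝ) : tf hP hQ (ybar hP hQ t) = Matrix.of fun i j => tf hP hQ (P - Q) i j
    / (t * hP.1.eigenvalues i + (1 - t) * hQ.1.eigenvalues j : ℝ) := by
  simp only [tf, ybar, Matrix.mul_assoc]
  rw [evU_cancel2]
  rw [show ∀ (M : Matrix (Fin n) (Fin n) ℂ), M * (star (evU hQ.1) * evU hQ.1) = M from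
    fun M => by rw [evU_star_mul, Matrix.mul_one], ← Matrix.mul_assoc]

lemma lemmaB1 {t : ℝ} (ht : t ∈ Set.Icc (0:ℝ) 1) :
    (((P - Q) * ybar hP hQ t).trace).re = phi hP hQ t := by
  rw [trace_form_re hP hQ, tf_ybar hP hQ, phi]
  refine Finset.sum_congr rfl fun i _ => Finset.sum_congr rfl fun j _ => ?_
  have hd := (denom_pos hP hQ ht i j).ne'
  set c := tf hP hQ (P - Q) i j
  set d := t * hP.1.eigenvalues i + (1 - t) * hQ.1.eigenvalues j
  rw [Matrix.of_apply, mul_div_assoc', ← Complex.normSq_eq_conj_mul_self,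
    ← Complex.ofReal_div, Complex.ofReal_re, Complex.normSq_eq_norm_sq]

lemma lemmaB2 {t : ℝ} (ht : t ∈ Set.Icc (0:ℝ) 1) :
    t * (((ybar hP hQ t)ᴴ * P * ybar hP hQ t).trace).re
      + (1 - t) * (((ybar hP hQ t)ᴴ * ybar hP hQ t * Q).trace).re = phi hP hQ t := by
  rw [trace_P_re hP hQ, trace_Q_re hP hQ, tf_ybar hP hQ, phi]
  simp only [Finset.mul_sum, ← Finset.sum_add_distrib]
  refine Finset.sum_congr rfl fun i _ => Finset.sum_congr rfl fun j _ => ?_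
  have hd := denom_pos hP hQ ht i j
  set c := tf hP hQ (P - Q) i j
  set p := hP.1.eigenvalues i
  set q := hQ.1.eigenvalues j
  have hnorm : ‖(Matrix.of fun i j => tf hP hQ (P - Q) i j
      / (t * hP.1.eigenvalues i + (1 - t) * hQ.1.eigenvalues j : ℝ)) i j‖ ^ 2
      = ‖c‖ ^ 2 / (t * p + (1 - t) * q) ^ 2 := by
    rw [Matrix.of_apply, norm_div, Complex.norm_real, div_pow, Real.norm_eq_abs, sq_abs]
  rw [hnorm]
  field_simp

lemma mlog_eq {A : Matrix (Fin n) (Fin n) ℂ} (hA : A.IsHermitian) :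
    mlog A = evU hA * diagonal (Complex.ofReal ∘ Real.log ∘ hA.eigenvalues) * star (evU hA) := by
  rw [mlog, dif_pos hA]
  rfl

lemma sand_left {A M D : Matrix (Fin n) (Fin n) ℂ} (hA : A.IsHermitian)
    (hM : M = evU hA * D * star (evU hA)) (R : Matrix (Fin n) (Fin n) ℂ) :
    star (evU hA) * (M * R) = D * (star (evU hA) * R) := by
  rw [hM]
  simp only [Matrix.mul_assoc, evU_cancel2 hA]

lemma sand_right {A M D : Matrix (Fin n) (Fin n) ℂ} (hA : A.IsHermitian)
    (hM : M = evU hA * D * star (evU hA)) (L : Matrix (Fin n) (Fin n) ℂ) :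
    L * M * evU hA = L * evU hA * D := by
  rw [hM]
  simp only [Matrix.mul_assoc, evU_star_mul hA, Matrix.mul_one]

lemma tf_sub_entry (i j : Fin n) :
    tf hP hQ (P - Q) i j
      = ((hP.1.eigenvalues i : ℂ) - (hQ.1.eigenvalues j : ℂ)) * tf hP hQ (1 : Matrix _ _ ℂ) i j := by
  have hW : tf hP hQ (1 : Matrix _ _ ℂ) = star (evU hP.1) * evU hQ.1 := by
    rw [tf, Matrix.mul_one]
  have hsub : tf hP hQ (P - Q)
      = diagonal (Complex.ofReal ∘ hP.1.eigenvalues) * (star (evU hP.1) * evU hQ.1)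
      - (star (evU hP.1) * evU hQ.1) * diagonal (Complex.ofReal ∘ hQ.1.eigenvalues) := by
    rw [tf, Matrix.mul_sub, Matrix.sub_mul,
      Matrix.mul_assoc (star (evU hP.1)) P (evU hQ.1),
      sand_left hP.1 (spectral hP.1) (evU hQ.1),
      sand_right hQ.1 (spectral hQ.1) (star (evU hP.1))]
  rw [hsub, hW]
  simp [Matrix.sub_apply, Matrix.diagonal_mul, Matrix.mul_diagonal]
  ring

lemma tf_mlog_entry (i j : Fin n) :
    tf hP hQ (mlog P - mlog Q) i j
      = ((Real.log (hP.1.eigenvalues i) : ℂ) - (Real.log (hQ.1.eigenvalues j) : ℂ))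
        * tf hP hQ (1 : Matrix _ _ ℂ) i j := by
  have hW : tf hP hQ (1 : Matrix _ _ ℂ) = star (evU hP.1) * evU hQ.1 := by
    rw [tf, Matrix.mul_one]
  have hsub : tf hP hQ (mlog P - mlog Q)
      = diagonal (Complex.ofReal ∘ Real.log ∘ hP.1.eigenvalues) * (star (evU hP.1) * evU hQ.1)
      - (star (evU hP.1) * evU hQ.1)
        * diagonal (Complex.ofReal ∘ Real.log ∘ hQ.1.eigenvalues) := by
    rw [tf, Matrix.mul_sub, Matrix.sub_mul,
      Matrix.mul_assoc (star (evU hP.1)) (mlog P) (evU hQ.1),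
      sand_left hP.1 (mlog_eq hP.1) (evU hQ.1),
      sand_right hQ.1 (mlog_eq hQ.1) (star (evU hP.1))]
  rw [hsub, hW]
  simp [Matrix.sub_apply, Matrix.diagonal_mul, Matrix.mul_diagonal]
  ring

lemma S_formula :
    relEnt P Q + relEnt Q P
      = ∑ i, ∑ j, (hP.1.eigenvalues i - hQ.1.eigenvalues j)
          * (Real.log (hP.1.eigenvalues i) - Real.log (hQ.1.eigenvalues j))
          * ‖tf hP hQ (1 : Matrix _ _ ℂ) i j‖ ^ 2 := by
  have m1 : (P - Q) * (mlog P - mlog Q)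
      = P * (mlog P - mlog Q) - Q * (mlog P - mlog Q) := Matrix.sub_mul _ _ _
  have m2 : Q * (mlog Q - mlog P) = -(Q * (mlog P - mlog Q)) := by
    rw [← Matrix.mul_neg, neg_sub]
  have key : relEnt P Q + relEnt Q P = (((P - Q) * (mlog P - mlog Q)).trace).re := by
    simp only [relEnt]
    rw [m2, m1, Matrix.trace_sub, Matrix.trace_neg, Complex.sub_re, Complex.neg_re]
    ring
  rw [key, trace_form_re hP hQ]
  refine Finset.sum_congr rfl fun i _ => Finset.sum_congr rfl fun j _ => ?_
  rw [tf_sub_entry hP hQ i j, tf_mlog_entry hP hQ i j, _root_.map_mul, _root_.map_sub,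
    Complex.conj_ofReal, Complex.conj_ofReal]
  set w := tf hP hQ (1 : Matrix _ _ ℂ) i j
  set p := hP.1.eigenvalues i
  set q := hQ.1.eigenvalues j
  have e1 : ((p : ℂ) - (q : ℂ)) * (starRingEnd ℂ) w
        * (((Real.log p : ℂ) - (Real.log q : ℂ)) * w)
      = (((p : ℝ) - q) * (Real.log p - Real.log q) : ℝ) * ((starRingEnd ℂ) w * w) := by
    push_cast
    ring
  rw [e1, ← Complex.normSq_eq_conj_mul_self, ← Complex.ofReal_mul, Complex.ofReal_re,
    Complex.normSq_eq_norm_sq]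

end PD

lemma scalar_int {p q : ℝ} (hp : 0 < p) (hq : 0 < q) (w : ℝ) :
    ∫ t in (0:ℝ)..1, ((p - q) ^ 2 * w) / (t * p + (1 - t) * q)
      = (p - q) * (Real.log p - Real.log q) * w := by
  rcases eq_or_ne p q with h | h
  · simp [h]
  · have huIcc : Set.uIcc (0:ℝ) 1 = Set.Icc (0:ℝ) 1 := Set.uIcc_of_le zero_le_one
    have hd : ∀ t ∈ Set.uIcc (0:ℝ) 1, 0 < t * (p - q) + q := by
      rw [huIcc]
      rintro t ⟨h0, h1⟩
      rcases eq_or_lt_of_le h0 with h' | h'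
      · nlinarith
      · nlinarith [mul_pos h' hp, mul_nonneg (sub_nonneg.2 h1) hq.le]
    have hrw : ∀ t : ℝ, ((p - q) ^ 2 * w) / (t * p + (1 - t) * q)
        = ((p - q) ^ 2 * w) / (t * (p - q) + q) := by
      intro t; ring_nf
    simp only [hrw]
    have hderiv : ∀ t ∈ Set.uIcc (0:ℝ) 1,
        HasDerivAt (fun s => ((p - q) * w) * Real.log (s * (p - q) + q))
          (((p - q) ^ 2 * w) / (t * (p - q) + q)) t := by
      intro t ht
      have h1 : HasDerivAt (fun s : ℝ => s * (p - q) + q) (p - q) t := by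
        simpa using ((hasDerivAt_id t).mul_const (p - q)).add_const q
      have h2 := (Real.hasDerivAt_log (hd t ht).ne').comp t h1
      have h3 := h2.const_mul ((p - q) * w)
      convert h3 using 1
      · rfl
      · rfl
      · rfl
      ring
    have hint : IntervalIntegrable (fun t => ((p - q) ^ 2 * w) / (t * (p - q) + q))
        MeasureTheory.volume 0 1 := by
      apply ContinuousOn.intervalIntegrable
      apply ContinuousOn.div continuousOn_const
      · exact ((continuous_id.mul continuous_const).add continuous_const).continuousOn
      · exact fun t ht => (hd t ht).ne'
    rw [intervalIntegral.integral_eq_sub_of_hasDerivAt hderiv hint]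
    simp only [one_mul, zero_mul, zero_add]
    rw [show p - q + q = p by ring]
    ring

section PD2
variable {P Q : Matrix (Fin n) (Fin n) ℂ} (hP : P.PosDef) (hQ : Q.PosDef)

lemma norm_tf_sub_sq (i j : Fin n) :
    ‖tf hP hQ (P - Q) i j‖ ^ 2
      = (hP.1.eigenvalues i - hQ.1.eigenvalues j) ^ 2
        * ‖tf hP hQ (1 : Matrix _ _ ℂ) i j‖ ^ 2 := by
  rw [tf_sub_entry hP hQ i j, norm_mul, mul_pow, ← Complex.ofReal_sub, Complex.norm_real,
    Real.norm_eq_abs, sq_abs]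

lemma term_contOn (i j : Fin n) :
    ContinuousOn (fun t => ‖tf hP hQ (P - Q) i j‖ ^ 2
      / (t * hP.1.eigenvalues i + (1 - t) * hQ.1.eigenvalues j)) (Set.uIcc (0:ℝ) 1) := by
  have huIcc : Set.uIcc (0:ℝ) 1 = Set.Icc (0:ℝ) 1 := Set.uIcc_of_le zero_le_one
  apply ContinuousOn.div continuousOn_const
  · exact ((continuous_id.mul continuous_const).add
      ((continuous_const.sub continuous_id).mul continuous_const)).continuousOn
  · intro t ht
    rw [huIcc] at ht
    exact (denom_pos hP hQ ht i j).ne'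

lemma term_integrable (i j : Fin n) :
    IntervalIntegrable (fun t => ‖tf hP hQ (P - Q) i j‖ ^ 2
      / (t * hP.1.eigenvalues i + (1 - t) * hQ.1.eigenvalues j))
      MeasureTheory.volume 0 1 :=
  (term_contOn hP hQ i j).intervalIntegrable

lemma phi_contOn : ContinuousOn (phi hP hQ) (Set.uIcc (0:ℝ) 1) := by
  have : phi hP hQ = fun t => ∑ i, ∑ j, ‖tf hP hQ (P - Q) i j‖ ^ 2
      / (t * hP.1.eigenvalues i + (1 - t) * hQ.1.eigenvalues j) := by
    funext t; simp only [phi]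
  rw [this]
  exact continuousOn_finset_sum _ fun i _ => continuousOn_finset_sum _ fun j _ =>
    term_contOn hP hQ i j

lemma phi_integrable : IntervalIntegrable (phi hP hQ) MeasureTheory.volume 0 1 :=
  (phi_contOn hP hQ).intervalIntegrable

lemma integral_phi :
    ∫ t in (0:ℝ)..1, phi hP hQ t = relEnt P Q + relEnt Q P := by
  rw [S_formula hP hQ]
  have h1 : ∫ t in (0:ℝ)..1, phi hP hQ t
      = ∑ i, ∑ j, ∫ t in (0:ℝ)..1, ‖tf hP hQ (P - Q) i j‖ ^ 2
          / (t * hP.1.eigenvalues i + (1 - t) * hQ.1.eigenvalues j) := by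
    have e1 : ∫ t in (0:ℝ)..1, phi hP hQ t
        = ∫ t in (0:ℝ)..1, ∑ i, ∑ j, ‖tf hP hQ (P - Q) i j‖ ^ 2
            / (t * hP.1.eigenvalues i + (1 - t) * hQ.1.eigenvalues j) := by
      refine intervalIntegral.integral_congr fun t _ => ?_
      simp only [phi]
    rw [e1, intervalIntegral.integral_finset_sum (fun i _ =>
      ((continuousOn_finset_sum _ fun j _ => term_contOn hP hQ i j).intervalIntegrable))]
    exact Finset.sum_congr rfl fun i _ => intervalIntegral.integral_finset_sum
      fun j _ => term_integrable hP hQ i j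
  rw [h1]
  refine Finset.sum_congr rfl fun i _ => Finset.sum_congr rfl fun j _ => ?_
  have := scalar_int (hP.eigenvalues_pos i) (hQ.eigenvalues_pos j)
    (‖tf hP hQ (1 : Matrix _ _ ℂ) i j‖ ^ 2)
  rw [← this]
  refine intervalIntegral.integral_congr fun t _ => ?_
  rw [norm_tf_sub_sq hP hQ i j]

end PD2

lemma trace_smul_comb_re (A B Y : Matrix (Fin n) (Fin n) ℂ) (l m : ℝ) :
    ((((l • A + m • B) : Matrix (Fin n) (Fin n) ℂ) * Y).trace).re
      = l * ((A * Y).trace).re + m * ((B * Y).trace).re := by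
  rw [Matrix.add_mul, Matrix.smul_mul, Matrix.smul_mul, Matrix.trace_add, Matrix.trace_smul,
    Matrix.trace_smul, Complex.add_re, Complex.smul_re, Complex.smul_re]
  simp

lemma lemmaC {P₁ P₂ Q₁ Q₂ : Matrix (Fin n) (Fin n) ℂ}
    (hP₁ : P₁.PosDef) (hP₂ : P₂.PosDef) (hQ₁ : Q₁.PosDef) (hQ₂ : Q₂.PosDef)
    {l : ℝ} (hl0 : 0 ≤ l) (hl1 : l ≤ 1)
    (hPc : (l • P₁ + (1 - l) • P₂).PosDef) (hQc : (l • Q₁ + (1 - l) • Q₂).PosDef)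
    {t : ℝ} (ht : t ∈ Set.Icc (0:ℝ) 1) :
    phi hPc hQc t ≤ l * phi hP₁ hQ₁ t + (1 - l) * phi hP₂ hQ₂ t := by
  set Y := ybar hPc hQc t with hY
  have hA₁ := lemmaA hP₁ hQ₁ ht Y
  have hA₂ := lemmaA hP₂ hQ₂ ht Y
  have hB1 := lemmaB1 hPc hQc ht
  have hB2 := lemmaB2 hPc hQc ht
  rw [← hY] at hB1 hB2
  have lin1 : (((l • P₁ + (1 - l) • P₂ - (l • Q₁ + (1 - l) • Q₂)) * Y).trace).re
      = l * (((P₁ - Q₁) * Y).trace).re + (1 - l) * (((P₂ - Q₂) * Y).trace).re := by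
    have e : (l • P₁ + (1 - l) • P₂) - (l • Q₁ + (1 - l) • Q₂)
        = l • (P₁ - Q₁) + (1 - l) • (P₂ - Q₂) := by
      rw [smul_sub, smul_sub]; abel
    rw [e, trace_smul_comb_re]
  have lin2 : ((Yᴴ * (l • P₁ + (1 - l) • P₂) * Y).trace).re
      = l * ((Yᴴ * P₁ * Y).trace).re + (1 - l) * ((Yᴴ * P₂ * Y).trace).re := by
    rw [Matrix.mul_add, Matrix.mul_smul, Matrix.mul_smul, Matrix.add_mul, Matrix.smul_mul,
      Matrix.smul_mul, Matrix.trace_add, Matrix.trace_smul, Matrix.trace_smul, Complex.add_re,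
      Complex.smul_re, Complex.smul_re]
    simp
  have lin3 : ((Yᴴ * Y * (l • Q₁ + (1 - l) • Q₂)).trace).re
      = l * ((Yᴴ * Y * Q₁).trace).re + (1 - l) * ((Yᴴ * Y * Q₂).trace).re := by
    rw [Matrix.mul_add, Matrix.mul_smul, Matrix.mul_smul, Matrix.trace_add, Matrix.trace_smul,
      Matrix.trace_smul, Complex.add_re, Complex.smul_re, Complex.smul_re]
    simp
  have key₁ := mul_le_mul_of_nonneg_left hA₁ hl0
  have key₂ := mul_le_mul_of_nonneg_left hA₂ (by linarith : (0:ℝ) ≤ 1 - l)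
  rw [lin1] at hB1
  rw [lin2, lin3] at hB2
  nlinarith [key₁, key₂, hB1, hB2]

lemma posDef_comb {A B : Matrix (Fin n) (Fin n) ℂ} (hA : A.PosDef) (hB : B.PosDef)
    {l : ℝ} (hl0 : 0 ≤ l) (hl1 : l ≤ 1) : ((l • A + (1 - l) • B)).PosDef := by
  rw [posDef_iff_dotProduct_mulVec]
  constructor
  · have h1 := hA.1
    have h2 := hB.1
    simp only [Matrix.IsHermitian] at *
    rw [Matrix.conjTranspose_add, Matrix.conjTranspose_smul, Matrix.conjTranspose_smul,
      star_trivial, star_trivial, h1, h2]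
  · intro x hx
    rw [Matrix.add_mulVec, Matrix.smul_mulVec, Matrix.smul_mulVec,
      dotProduct_add, dotProduct_smul, dotProduct_smul]
    have h1 := hA.dotProduct_mulVec_pos hx
    have h2 := hB.dotProduct_mulVec_pos hx
    rcases eq_or_lt_of_le hl0 with h | h
    · simp only [← h]
      simpa using h2
    · rcases eq_or_lt_of_le hl1 with h' | h'
      · simp only [h']
        simpa using h1
      · have e1 : (0:ℂ) < l • (dotProduct (star x) (A *ᵥ x)) := by
          rw [Complex.real_smul]
          exact mul_pos (by exact_mod_cast h) h1
        have e2 : (0:ℂ) < (1 - l) • (dotProduct (star x) (B *ᵥ x)) := by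
          rw [Complex.real_smul]
          exact mul_pos (by exact_mod_cast (by linarith : (0:ℝ) < 1 - l)) h2
        exact add_pos e1 e2

end SymmAux


/-- **Joint convexity of the symmetrized relative entropy** `(P,Q) ↦ H(P,Q) + H(Q,P)`
on pairs of positive definite matrices. -/
theorem symmetrized_relEnt_jointly_convex {n : ℕ}
    (P₁ P₂ Q₁ Q₂ : Matrix (Fin n) (Fin n) ℂ)
    (hP₁ : P₁.PosDef) (hP₂ : P₂.PosDef) (hQ₁ : Q₁.PosDef) (hQ₂ : Q₂.PosDef)
    (l : ℝ) (hl0 : 0 ≤ l) (hl1 : l ≤ 1) :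
    relEnt (l • P₁ + (1 - l) • P₂) (l • Q₁ + (1 - l) • Q₂)
      + relEnt (l • Q₁ + (1 - l) • Q₂) (l • P₁ + (1 - l) • P₂)
      ≤ l * (relEnt P₁ Q₁ + relEnt Q₁ P₁) + (1 - l) * (relEnt P₂ Q₂ + relEnt Q₂ P₂) := by
  have hPc := SymmAux.posDef_comb hP₁ hP₂ hl0 hl1
  have hQc := SymmAux.posDef_comb hQ₁ hQ₂ hl0 hl1
  have hφ1 := SymmAux.phi_integrable hP₁ hQ₁
  have hφ2 := SymmAux.phi_integrable hP₂ hQ₂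
  have hcomb : IntervalIntegrable
      (fun t => l * SymmAux.phi hP₁ hQ₁ t + (1 - l) * SymmAux.phi hP₂ hQ₂ t)
      MeasureTheory.volume 0 1 := (hφ1.const_mul l).add (hφ2.const_mul (1 - l))
  have hmono : ∫ t in (0:ℝ)..1, SymmAux.phi hPc hQc t
      ≤ ∫ t in (0:ℝ)..1, (l * SymmAux.phi hP₁ hQ₁ t + (1 - l) * SymmAux.phi hP₂ hQ₂ t) := by
    apply intervalIntegral.integral_mono_on zero_le_one (SymmAux.phi_integrable hPc hQc) hcomb
    intro t ht
    exact SymmAux.lemmaC hP₁ hP₂ hQ₁ hQ₂ hl0 hl1 hPc hQc ht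
  rw [intervalIntegral.integral_add (hφ1.const_mul l) (hφ2.const_mul (1 - l)),
    intervalIntegral.integral_const_mul, intervalIntegral.integral_const_mul,
    SymmAux.integral_phi hPc hQc, SymmAux.integral_phi hP₁ hQ₁,
    SymmAux.integral_phi hP₂ hQ₂] at hmono
  exact hmono
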